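/- arXiv:math/9411223 — 2 statements merged into one kernel-verified Lean document; each statement's English description precedes it below -/
import Mathlib

section
/- If a finite graph G has a vertex cover of cardinality m, then G has at most 2^m distinct minimal vertex covers. -/
open SimpleGraph

variable {V : Type*}

/-- `C` is a vertex cover of `G`: every edge has an endpoint in `C`. -/
def IsVertexCover (G : SimpleGraph V) (C : Set V) : Prop :=
  ∀ ⦃u v : V⦄, G.Adj u v → u ∈ C ∨ v ∈ C

/-- `C` is a minimal vertex cover: a vertex cover with no proper subset a vertex cover. -/
def IsMinVertexCover (G : SimpleGraph V) (C : Set V) : Prop :=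
  _root_.IsVertexCover G C ∧ ∀ D : Set V, D ⊂ C → ¬ _root_.IsVertexCover G D

/-- `S` is an independent set of `G`. -/
def IsIndepSet (G : SimpleGraph V) (S : Set V) : Prop :=
  ∀ ⦃u⦄, u ∈ S → ∀ ⦃v⦄, v ∈ S → ¬ G.Adj u v

/-- `D` is a dominating set of `G`. -/
def IsDomSet (G : SimpleGraph V) (D : Set V) : Prop :=
  ∀ v : V, v ∉ D → ∃ u ∈ D, G.Adj u v

/-- The closed neighborhood `N[x]` of `x`. -/
def closedNbhd (G : SimpleGraph V) (x : V) : Set V :=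
  insert x (G.neighborSet x)

lemma sub_aux {G : SimpleGraph V} {C0 D1 D2 : Set V} (hC0 : _root_.IsVertexCover G C0)
    (h1 : IsMinVertexCover G D1) (h2 : IsMinVertexCover G D2)
    (he : D1 ∩ C0 = D2 ∩ C0) : D1 ⊆ D2 := by
  intro v hv
  by_cases hvC : v ∈ C0
  · have : v ∈ D2 ∩ C0 := he ▸ ⟨hv, hvC⟩
    exact this.1
  · have hss : D1 \ {v} ⊂ D1 := Set.sdiff_singleton_ssubset.mpr hv
    have hnc := h1.2 _ hss
    simp only [_root_.IsVertexCover, not_forall] at hnc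
    obtain ⟨u, w, hadj, hor⟩ := hnc
    push_neg at hor
    obtain ⟨hu, hw⟩ := hor
    have hcases : (u = v ∧ w ∉ D1) ∨ (w = v ∧ u ∉ D1) := by
      rcases h1.1 hadj with h | h
      · left
        have hu' : u = v := by
          by_contra hne
          exact hu ⟨h, hne⟩
        refine ⟨hu', fun hwD => hw ⟨hwD, ?_⟩⟩
        intro hwv
        exact (G.ne_of_adj hadj) (hu'.trans hwv.symm)
      · right
        have hw' : w = v := by
          by_contra hne
          exact hw ⟨h, hne⟩
        refine ⟨hw', fun huD => hu ⟨huD, ?_⟩⟩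
        intro huv
        exact (G.ne_of_adj hadj) (huv.trans hw'.symm)
    obtain ⟨x, hxadj, hxD1⟩ : ∃ x, G.Adj v x ∧ x ∉ D1 := by
      rcases hcases with ⟨rfl, hw2⟩ | ⟨rfl, hu2⟩
      · exact ⟨w, hadj, hw2⟩
      · exact ⟨u, hadj.symm, hu2⟩
    have hxC0 : x ∈ C0 := by
      rcases hC0 hxadj with h | h
      · exact absurd h hvC
      · exact h
    have hxD2 : x ∉ D2 := fun hxD2 => hxD1 (he ▸ (⟨hxD2, hxC0⟩ : x ∈ D2 ∩ C0) : x ∈ D1 ∩ C0).1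
    rcases h2.1 hxadj with h | h
    · exact h
    · exact absurd h hxD2

theorem stmt0 [Fintype V] (G : SimpleGraph V) (m : ℕ)
    (h : ∃ C : Set V, _root_.IsVertexCover G C ∧ C.ncard = m) :
    {C : Set V | IsMinVertexCover G C}.ncard ≤ 2 ^ m := by
  classical
  obtain ⟨C0, hC0, hm⟩ := h
  have hinj : Set.InjOn (fun D => (D ∩ C0).toFinset)
      {C : Set V | IsMinVertexCover G C} := by
    intro D1 hD1 D2 hD2 heq
    have he : D1 ∩ C0 = D2 ∩ C0 := by
      have := congrArg (fun s : Finset V => (s : Set V)) heq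
      simpa using this
    exact Set.Subset.antisymm (sub_aux hC0 hD1 hD2 he) (sub_aux hC0 hD2 hD1 he.symm)
  have hmaps : ∀ D ∈ {C : Set V | IsMinVertexCover G C},
      (D ∩ C0).toFinset ∈ (C0.toFinset.powerset : Finset (Finset V)) := by
    intro D _
    simp [Finset.mem_powerset, Set.toFinset_subset_toFinset]
  calc {C : Set V | IsMinVertexCover G C}.ncard
      ≤ ((C0.toFinset.powerset : Finset (Finset V)) : Set (Finset V)).ncard := by
        apply Set.ncard_le_ncard_of_injOn _ hmaps hinj (Finset.finite_toSet _)
    _ = 2 ^ m := by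
        rw [Set.ncard_coe_finset, Finset.card_powerset, Set.ncard_eq_toFinset_card'] at *
        rw [hm]
end

section
/- Fix a minimal vertex cover A of a finite graph G. The map sending each minimal vertex cover B of G to A ∩ B is injective on the set of minimal vertex covers of G. -/
open SimpleGraph

variable {V : Type*}

lemma min_cover_priv {G : SimpleGraph V} {B : Set V} (hB : IsMinVertexCover G B)
    {v : V} (hv : v ∈ B) : ∃ y, G.Adj v y ∧ y ∉ B := by
  by_contra h
  push_neg at h
  apply hB.2 (B \ {v})
  · exact Set.ssubset_iff_of_subset Set.diff_subset |>.2 ⟨v, hv, fun hx => hx.2 rfl⟩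
  · intro u w huw
    rcases hB.1 huw with hu | hw
    · by_cases huv : u = v
      · subst huv
        have hwB := h w huw
        exact Or.inr ⟨hwB, fun hwv => G.irrefl (hwv ▸ huw)⟩
      · exact Or.inl ⟨hu, huv⟩
    · by_cases hwv : w = v
      · subst hwv
        have := h u huw.symm
        exact Or.inl ⟨this, fun huv => G.irrefl (huv ▸ huw)⟩
      · exact Or.inr ⟨hw, hwv⟩

lemma sub_dir {G : SimpleGraph V} {A B B' : Set V} (hA : _root_.IsVertexCover G A)
    (hB : IsMinVertexCover G B) (hB' : _root_.IsVertexCover G B')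
    (hEq : A ∩ B = A ∩ B') : B ⊆ B' := by
  intro v hv
  by_cases hvA : v ∈ A
  · have : v ∈ A ∩ B' := hEq ▸ Set.mem_inter hvA hv
    exact this.2
  · obtain ⟨y, hadj, hyB⟩ := min_cover_priv hB hv
    have hyA : y ∈ A := (hA hadj).resolve_left hvA
    have hyB' : y ∉ B' := fun h => hyB ((Set.ext_iff.mp hEq y).mpr ⟨hyA, h⟩).2
    exact (hB' hadj).resolve_right hyB'

theorem stmt5 [Fintype V] (G : SimpleGraph V) (A : Set V)
    (hA : IsMinVertexCover G A) :
    Set.InjOn (fun B : Set V => A ∩ B) {B : Set V | IsMinVertexCover G B} := by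
  intro B hB B' hB' hEq
  simp only [Set.mem_setOf_eq] at hB hB'
  exact Set.Subset.antisymm (sub_dir hA.1 hB hB'.1 hEq) (sub_dir hA.1 hB' hB.1 hEq.symm)
end
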